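/- Let Δ be a simplicial complex on [n], 1 ≤ i < j ≤ n, Γ = Shift_{ij}(Δ), and W ⊂ [n]∖{i,j}. Set Δ_1 = Δ_{W∪{i}}, Δ_2 = Δ_{W∪{j}}, Γ_1 = Γ_{W∪{i}}, Γ_2 = Γ_{W∪{j}}. Then Δ_1 ∩ Δ_2 = Γ_1 ∩ Γ_2 = Δ_W = Γ_W, and Γ_1 ∪ Γ_2 = Shift_{ij}(Δ_1 ∪ Δ_2). -/

import Mathlib

/-- A simplicial complex on `[n]`, modeled as a set of finsets of `Fin n`. -/
def IsSimplicialComplex {n : ℕ} (Δ : Set (Finset (Fin n))) : Prop :=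
  (∀ j : Fin n, {j} ∈ Δ) ∧ ∀ σ ∈ Δ, ∀ τ : Finset (Fin n), τ ⊆ σ → τ ∈ Δ

/-- A collection of faces is closed under passing to subsets. -/
def DownClosed {n : ℕ} (Δ : Set (Finset (Fin n))) : Prop :=
  ∀ σ ∈ Δ, ∀ τ : Finset (Fin n), τ ⊆ σ → τ ∈ Δ

open Classical in
/-- `C_{ij}(σ)`, the basic combinatorial shifting operation on a single face. -/
noncomputable def shiftFace {n : ℕ} (Δ : Set (Finset (Fin n))) (i j : Fin n)
    (σ : Finset (Fin n)) : Finset (Fin n) :=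
  if i ∈ σ ∧ j ∉ σ ∧ insert j (σ.erase i) ∉ Δ then insert j (σ.erase i) else σ

/-- `Shift_{ij}(Δ)`. -/
noncomputable def shiftOp {n : ℕ} (Δ : Set (Finset (Fin n))) (i j : Fin n) :
    Set (Finset (Fin n)) :=
  (shiftFace Δ i j) '' Δ

/-- The induced subcomplex `Δ_W = {σ ∈ Δ : σ ⊆ W}`. -/
def restrictC {n : ℕ} (Δ : Set (Finset (Fin n))) (W : Finset (Fin n)) :
    Set (Finset (Fin n)) :=
  {σ | σ ∈ Δ ∧ σ ⊆ W}

/-- The space of simplicial `(c-1)`-chains of `Δ` with coefficients in `K`, spanned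
by the faces of `Δ` of cardinality `c` (including the empty face when `c = 0`,
which yields the *reduced* chain complex). -/
abbrev SimplicialChain (K : Type) [Field K] {n : ℕ} (Δ : Set (Finset (Fin n)))
    (c : ℕ) : Type :=
  {σ : Finset (Fin n) // σ ∈ Δ ∧ σ.card = c} → K

open Classical in
/-- The simplicial boundary map (from chains spanned by cardinality-`(c+1)` faces to
chains spanned by cardinality-`c` faces). -/
noncomputable def simplicialBoundary (K : Type) [Field K] {n : ℕ}
    (Δ : Set (Finset (Fin n))) (c : ℕ) :
    SimplicialChain K Δ (c + 1) →ₗ[K] SimplicialChain K Δ c where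
  toFun f τ := ∑ k : Fin n,
    if h : k ∉ τ.1 ∧ insert k τ.1 ∈ Δ then
      ((-1 : K) ^ ((τ.1.filter (fun l => l < k)).card)) •
        f ⟨insert k τ.1, h.2, by rw [Finset.card_insert_of_notMem h.1, τ.2.2]⟩
    else 0
  map_add' f g := by
    funext τ
    simp only [Pi.add_apply]
    rw [← Finset.sum_add_distrib]
    refine Finset.sum_congr rfl fun k _ => ?_
    split
    · simp only [Pi.add_apply, smul_add]
    · simp
  map_smul' a f := by
    funext τ
    simp only [Pi.smul_apply, RingHom.id_apply]
    rw [Finset.smul_sum]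
    refine Finset.sum_congr rfl fun k _ => ?_
    split
    · simp only [Pi.smul_apply, smul_comm a]
    · simp

/-- The space of (reduced) simplicial cycles in the chain space spanned by the
cardinality-`c` faces. -/
noncomputable def simplicialCycles (K : Type) [Field K] {n : ℕ}
    (Δ : Set (Finset (Fin n))) (c : ℕ) : Submodule K (SimplicialChain K Δ c) :=
  match c with
  | 0 => ⊤
  | (d + 1) => LinearMap.ker (simplicialBoundary K Δ d)

/-- The reduced simplicial homology `H̃_{c-1}(Δ; K)`: cycles modulo boundaries in the
chain space spanned by the cardinality-`c` faces of `Δ`. -/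
abbrev reducedHomology (K : Type) [Field K] {n : ℕ} (Δ : Set (Finset (Fin n)))
    (c : ℕ) : Type :=
  simplicialCycles K Δ c ⧸
    Submodule.comap (simplicialCycles K Δ c).subtype
      (LinearMap.range (simplicialBoundary K Δ c))

open Classical in
/-- The chain map induced by an inclusion of complexes `Δ' ⊆ Δ''` (extension by
zero of the dual-basis description; on faces it is the evident inclusion). -/
noncomputable def extendChain (K : Type) [Field K] {n : ℕ}
    {Δ' Δ'' : Set (Finset (Fin n))} (h : Δ' ⊆ Δ'') (c : ℕ) :
    SimplicialChain K Δ' c →ₗ[K] SimplicialChain K Δ'' c where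
  toFun f τ := if hτ : τ.1 ∈ Δ' then f ⟨τ.1, hτ, τ.2.2⟩ else 0
  map_add' f g := by
    funext τ
    by_cases hτ : τ.1 ∈ Δ' <;> simp [hτ]
  map_smul' a f := by
    funext τ
    by_cases hτ : τ.1 ∈ Δ' <;> simp [hτ]

theorem boundary_extendChain (K : Type) [Field K] {n : ℕ}
    {Δ' Δ'' : Set (Finset (Fin n))} (h : Δ' ⊆ Δ'') (hdc : DownClosed Δ') (c : ℕ)
    (f : SimplicialChain K Δ' (c + 1)) :
    simplicialBoundary K Δ'' c (extendChain K h (c + 1) f) =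
      extendChain K h c (simplicialBoundary K Δ' c f) := by
  funext τ
  simp only [simplicialBoundary, extendChain, LinearMap.coe_mk, AddHom.coe_mk]
  by_cases hτ : τ.1 ∈ Δ'
  · rw [dif_pos hτ]
    refine Finset.sum_congr rfl fun k _ => ?_
    by_cases hins : insert k τ.1 ∈ Δ'
    · have hins'' : insert k τ.1 ∈ Δ'' := h hins
      by_cases hk : k ∈ τ.1
      · rw [dif_neg (by tauto), dif_neg (by tauto)]
      · rw [dif_pos ⟨hk, hins''⟩, dif_pos hins, dif_pos ⟨hk, hins⟩]
    · by_cases hcond : k ∉ τ.1 ∧ insert k τ.1 ∈ Δ''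
      · rw [dif_pos hcond, dif_neg hins, smul_zero,
          dif_neg (show ¬(k ∉ τ.1 ∧ insert k τ.1 ∈ Δ') by tauto)]
      · rw [dif_neg hcond,
          dif_neg (show ¬(k ∉ τ.1 ∧ insert k τ.1 ∈ Δ') by tauto)]
  · rw [dif_neg hτ]
    refine Finset.sum_eq_zero fun k _ => ?_
    by_cases hcond : k ∉ τ.1 ∧ insert k τ.1 ∈ Δ''
    · rw [dif_pos hcond]
      have hnot : insert k τ.1 ∉ Δ' := fun hmem =>
        hτ (hdc _ hmem _ (Finset.subset_insert _ _))
      rw [dif_neg hnot, smul_zero]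
    · rw [dif_neg hcond]

theorem extend_mem_cycles (K : Type) [Field K] {n : ℕ}
    {Δ' Δ'' : Set (Finset (Fin n))} (h : Δ' ⊆ Δ'') (hdc : DownClosed Δ') (c : ℕ) :
    ∀ x ∈ simplicialCycles K Δ' c, extendChain K h c x ∈ simplicialCycles K Δ'' c := by
  intro x hx
  cases c with
  | zero => trivial
  | succ d =>
    have hx' : simplicialBoundary K Δ' d x = 0 := hx
    show simplicialBoundary K Δ'' d (extendChain K h (d + 1) x) = 0
    rw [boundary_extendChain K h hdc d x, hx', map_zero]

/-- The map `H̃_{c-1}(Δ'; K) → H̃_{c-1}(Δ''; K)` induced on reduced simplicial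
homology by an inclusion of complexes `Δ' ⊆ Δ''`. -/
noncomputable def inducedHomologyMap (K : Type) [Field K] {n : ℕ}
    {Δ' Δ'' : Set (Finset (Fin n))} (h : Δ' ⊆ Δ'') (hdc : DownClosed Δ') (c : ℕ) :
    reducedHomology K Δ' c →ₗ[K] reducedHomology K Δ'' c :=
  Submodule.mapQ _ _
    (LinearMap.restrict (extendChain K h c) (extend_mem_cycles K h hdc c))
    (by
      intro x hx
      simp only [Submodule.mem_comap, Submodule.coe_subtype, LinearMap.mem_range] at hx ⊢
      obtain ⟨u, hu⟩ := hx
      refine ⟨extendChain K h (c + 1) u, ?_⟩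
      have : (LinearMap.restrict (extendChain K h c)
          (extend_mem_cycles K h hdc c) x : SimplicialChain K Δ'' c) =
          extendChain K h c (x : SimplicialChain K Δ' c) := rfl
      rw [this, ← hu, boundary_extendChain K h hdc c u])

/-- The first map `H̃_k(Δ_W) → H̃_k(Δ_1) ⊕ H̃_k(Δ_2)`, `x ↦ (i_*(x), −j_*(x))`,
appearing in the reduced Mayer–Vietoris exact sequence (here `Δ_W = Δ_1 ∩ Δ_2`). -/
noncomputable def mayerVietorisMap (K : Type) [Field K] {n : ℕ}
    {ΔW Δ₁ Δ₂ : Set (Finset (Fin n))} (h₁ : ΔW ⊆ Δ₁) (h₂ : ΔW ⊆ Δ₂)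
    (hdc : DownClosed ΔW) (c : ℕ) :
    reducedHomology K ΔW c →ₗ[K]
      (reducedHomology K Δ₁ c) × (reducedHomology K Δ₂ c) :=
  LinearMap.prod (inducedHomologyMap K h₁ hdc c) (-(inducedHomologyMap K h₂ hdc c))


lemma shift_mem_of_no_j {n : ℕ} {Δ : Set (Finset (Fin n))} {i j : Fin n}
    {ρ : Finset (Fin n)} (hρ : ρ ∈ shiftOp Δ i j) (hj : j ∉ ρ) :
    ρ ∈ Δ ∧ ¬(i ∈ ρ ∧ insert j (ρ.erase i) ∉ Δ) := by
  obtain ⟨τ, hτ, heq⟩ := hρ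
  unfold shiftFace at heq
  split_ifs at heq with hc
  · exact absurd (heq ▸ Finset.mem_insert_self j _) hj
  · subst heq
    exact ⟨hτ, fun ⟨hi, hins⟩ => hc ⟨hi, hj, hins⟩⟩

lemma mem_shift_of_fixed {n : ℕ} {Δ : Set (Finset (Fin n))} {i j : Fin n}
    {ρ : Finset (Fin n)} (hρ : ρ ∈ Δ)
    (h : ¬(i ∈ ρ ∧ j ∉ ρ ∧ insert j (ρ.erase i) ∉ Δ)) :
    ρ ∈ shiftOp Δ i j :=
  ⟨ρ, hρ, by unfold shiftFace; rw [if_neg h]⟩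

/-- **The identities preceding Lemma 3.2.** Let `Δ` be a simplicial complex on
`[n]`, `1 ≤ i < j ≤ n`, `Γ = Shift_{ij}(Δ)` and `W ⊆ [n]∖{i,j}`. With
`Δ₁ = Δ_{W∪{i}}`, `Δ₂ = Δ_{W∪{j}}`, `Γ₁ = Γ_{W∪{i}}`, `Γ₂ = Γ_{W∪{j}}` one has
`Δ₁ ∩ Δ₂ = Γ₁ ∩ Γ₂ = Δ_W = Γ_W` and `Γ₁ ∪ Γ₂ = Shift_{ij}(Δ₁ ∪ Δ₂)`. -/
theorem restrict_shiftOp_identities (n : ℕ) (Δ : Set (Finset (Fin n)))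
    (hΔ : IsSimplicialComplex Δ) (i j : Fin n) (hij : i < j)
    (W : Finset (Fin n)) (hiW : i ∉ W) (hjW : j ∉ W) :
    restrictC Δ (insert i W) ∩ restrictC Δ (insert j W) =
        restrictC (shiftOp Δ i j) (insert i W) ∩ restrictC (shiftOp Δ i j) (insert j W) ∧
      restrictC (shiftOp Δ i j) (insert i W) ∩ restrictC (shiftOp Δ i j) (insert j W) =
        restrictC Δ W ∧
      restrictC Δ W = restrictC (shiftOp Δ i j) W ∧
      restrictC (shiftOp Δ i j) (insert i W) ∪ restrictC (shiftOp Δ i j) (insert j W) =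
        shiftOp (restrictC Δ (insert i W) ∪ restrictC Δ (insert j W)) i j := by
  obtain ⟨hvert, hdown⟩ := hΔ
  have hne : i ≠ j := ne_of_lt hij
  set Γ := shiftOp Δ i j with hΓ
  have hsubW : ∀ σ : Finset (Fin n), σ ⊆ insert i W → σ ⊆ insert j W → σ ⊆ W := by
    intro σ h1 h2 x hx
    rcases Finset.mem_insert.mp (h1 hx) with h | h
    · rcases Finset.mem_insert.mp (h2 hx) with h' | h'
      · exact absurd (h ▸ h') hne
      · exact absurd (h ▸ h') hiW
    · exact h
  have hjiW : ∀ σ : Finset (Fin n), σ ⊆ insert i W → j ∉ σ := by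
    intro σ h1 hx
    rcases Finset.mem_insert.mp (h1 hx) with h | h
    · exact hne h.symm
    · exact hjW h
  have hijW : ∀ σ : Finset (Fin n), σ ⊆ insert j W → i ∉ σ := by
    intro σ h1 hx
    rcases Finset.mem_insert.mp (h1 hx) with h | h
    · exact hne h
    · exact hiW h
  have heraseW : ∀ σ : Finset (Fin n), σ ⊆ insert i W → σ.erase i ⊆ W := by
    intro σ h1 x hx
    rcases Finset.mem_insert.mp (h1 (Finset.mem_of_mem_erase hx)) with h | h
    · exact absurd h (Finset.ne_of_mem_erase hx)
    · exact h
  -- Γ_W = Δ_W (as sets): for σ ⊆ W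
  have hW_eq : restrictC Δ W = restrictC Γ W := by
    ext σ
    constructor
    · rintro ⟨hσ, hsub⟩
      refine ⟨mem_shift_of_fixed hσ ?_, hsub⟩
      rintro ⟨hi, -⟩
      exact hiW (hsub hi)
    · rintro ⟨hσ, hsub⟩
      exact ⟨(shift_mem_of_no_j hσ (fun h => hjW (hsub h))).1, hsub⟩
  have hΓcap : restrictC Γ (insert i W) ∩ restrictC Γ (insert j W) = restrictC Δ W := by
    ext σ
    constructor
    · rintro ⟨⟨hσ, h1⟩, ⟨-, h2⟩⟩
      have hsub := hsubW σ h1 h2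
      exact (hW_eq ▸ (⟨hσ, hsub⟩ : σ ∈ restrictC Γ W) : σ ∈ restrictC Δ W)
    · rintro ⟨hσ, hsub⟩
      have : σ ∈ restrictC Γ W := hW_eq ▸ (⟨hσ, hsub⟩ : σ ∈ restrictC Δ W)
      exact ⟨⟨this.1, this.2.trans (Finset.subset_insert _ _)⟩,
             ⟨this.1, this.2.trans (Finset.subset_insert _ _)⟩⟩
  have hΔcap : restrictC Δ (insert i W) ∩ restrictC Δ (insert j W) = restrictC Δ W := by
    ext σ
    constructor
    · rintro ⟨⟨hσ, h1⟩, ⟨-, h2⟩⟩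
      exact ⟨hσ, hsubW σ h1 h2⟩
    · rintro ⟨hσ, hsub⟩
      exact ⟨⟨hσ, hsub.trans (Finset.subset_insert _ _)⟩,
             ⟨hσ, hsub.trans (Finset.subset_insert _ _)⟩⟩
  refine ⟨hΔcap.trans hΓcap.symm, hΓcap, hW_eq, ?_⟩
  -- the union identity
  set Λ := restrictC Δ (insert i W) ∪ restrictC Δ (insert j W) with hΛdef
  ext ρ
  constructor
  · rintro (⟨hρΓ, hρsub⟩ | ⟨hρΓ, hρsub⟩)
    · -- ρ ∈ Γ₁
      have hjρ : j ∉ ρ := hjiW ρ hρsub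
      obtain ⟨hρΔ, hcond⟩ := shift_mem_of_no_j hρΓ hjρ
      refine mem_shift_of_fixed (Or.inl ⟨hρΔ, hρsub⟩) ?_
      rintro ⟨hi, -, hins⟩
      by_cases hinsΔ : insert j (ρ.erase i) ∈ Δ
      · exact hins (Or.inr ⟨hinsΔ, Finset.insert_subset_insert j (heraseW ρ hρsub)⟩)
      · exact hcond ⟨hi, hinsΔ⟩
    · -- ρ ∈ Γ₂
      have hiρ : i ∉ ρ := hijW ρ hρsub
      obtain ⟨τ, hτ, heq⟩ := hρΓ
      unfold shiftFace at heq
      split_ifs at heq with hc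
      · obtain ⟨hiτ, hjτ, hins⟩ := hc
        -- τ ⊆ insert i W
        have hτsub : τ ⊆ insert i W := by
          intro x hx
          by_cases hxi : x = i
          · exact Finset.mem_insert.mpr (Or.inl hxi)
          · have hxρ : x ∈ ρ := heq ▸ Finset.mem_insert_of_mem
              (Finset.mem_erase.mpr ⟨hxi, hx⟩)
            rcases Finset.mem_insert.mp (hρsub hxρ) with h | h
            · exact absurd (h ▸ hx) hjτ
            · exact Finset.mem_insert_of_mem h
        refine ⟨τ, Or.inl ⟨hτ, hτsub⟩, ?_⟩
        unfold shiftFace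
        rw [if_pos ⟨hiτ, hjτ, fun h => hins (h.elim (fun h' => h'.1) (fun h' => h'.1))⟩]
        exact heq
      · subst heq
        refine mem_shift_of_fixed (Or.inr ⟨hτ, hρsub⟩) ?_
        rintro ⟨hi, -⟩
        exact hiρ hi
  · rintro ⟨τ, hτΛ, heq⟩
    unfold shiftFace at heq
    split_ifs at heq with hc
    · obtain ⟨hiτ, hjτ, hins⟩ := hc
      have hτΔ : τ ∈ Δ := hτΛ.elim (fun h => h.1) (fun h => h.1)
      have hτsub : τ ⊆ insert i W := by
        rcases hτΛ with ⟨-, h⟩ | ⟨-, h⟩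
        · exact h
        · exact absurd hiτ (hijW τ h)
      have hρsub : ρ ⊆ insert j W := heq ▸
        Finset.insert_subset_insert j (heraseW τ hτsub)
      have hinsΔ : insert j (τ.erase i) ∉ Δ := by
        intro h
        exact hins (Or.inr ⟨h, Finset.insert_subset_insert j (heraseW τ hτsub)⟩)
      refine Or.inr ⟨⟨τ, hτΔ, ?_⟩, hρsub⟩
      unfold shiftFace
      rw [if_pos ⟨hiτ, hjτ, hinsΔ⟩]
      exact heq
    · subst heq
      have hρΔ : τ ∈ Δ := hτΛ.elim (fun h => h.1) (fun h => h.1)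
      have hρΓ : τ ∈ Γ := by
        refine mem_shift_of_fixed hρΔ ?_
        rintro ⟨hi, hj, hins⟩
        refine hc ⟨hi, hj, ?_⟩
        intro h
        exact hins (h.elim (fun h' => h'.1) (fun h' => h'.1))
      rcases hτΛ with ⟨-, h⟩ | ⟨-, h⟩
      · exact Or.inl ⟨hρΓ, h⟩
      · exact Or.inr ⟨hρΓ, h⟩
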